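/- Let $\mathcal{X}=(\boldsymbol{x}_n)$ and $\mathcal{Y}=(\boldsymbol{y}_n)$ be monotone Schauder bases of Banach spaces $\mathbb{X}$ and $\mathbb{Y}$ with basis constants $K_1$ and $K_2$, with $\alpha = \sup_n\|\boldsymbol{x}_n\| < \infty$ and $\beta = \inf_n\|\boldsymbol{y}_n\| > 0$. Then the interleaved sequence $\boldsymbol{z}_{2k-1}=(\boldsymbol{x}_k,0)$, $\boldsymbol{z}_{2k}=(-\boldsymbol{x}_k,\boldsymbol{y}_k)$ is a Schauder basis of $\mathbb{X}\oplus_\infty\mathbb{Y}$ with basis constant at most $\big(1+2\max\{1,\alpha/\beta\}\big)\max\{K_1,K_2\}$. -/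

import Mathlib

/-- The interleaved sequence `𝒳 ⋉ 𝒴`: `z_{2k} = (x_k, 0)`, `z_{2k+1} = (-x_k, y_k)`
(indexing from `0`). -/
def interleave {X Y : Type*} [AddCommGroup X] [AddCommGroup Y]
    (x : ℕ → X) (y : ℕ → Y) : ℕ → X × Y :=
  fun n => if n % 2 = 0 then (x (n / 2), 0) else (-x (n / 2), y (n / 2))

theorem stmt17 {X Y : Type*} [NormedAddCommGroup X] [NormedSpace ℂ X]
    [NormedAddCommGroup Y] [NormedSpace ℂ Y]
    (x : ℕ → X) (y : ℕ → Y)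
    (xs : ℕ → X →L[ℂ] ℂ) (ys : ℕ → Y →L[ℂ] ℂ)
    (hxbi : ∀ n k, xs n (x k) = if n = k then 1 else 0)
    (hybi : ∀ n k, ys n (y k) = if n = k then 1 else 0)
    (hxd : Dense (Submodule.span ℂ (Set.range x) : Set X))
    (hyd : Dense (Submodule.span ℂ (Set.range y) : Set Y))
    (K₁ K₂ : ℝ) (hK₁1 : 1 ≤ K₁) (hK₂1 : 1 ≤ K₂)
    (hK₁ : ∀ (f : X) (m : ℕ), ‖∑ k ∈ Finset.range m, xs k f • x k‖ ≤ K₁ * ‖f‖)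
    (hK₂ : ∀ (f : Y) (m : ℕ), ‖∑ k ∈ Finset.range m, ys k f • y k‖ ≤ K₂ * ‖f‖)
    (α β : ℝ) (hα : ∀ n, ‖x n‖ ≤ α) (hβ0 : 0 < β) (hβ : ∀ n, β ≤ ‖y n‖) :
    ∃ zs : ℕ → (X × Y) →L[ℂ] ℂ,
      (∀ n k, zs n (interleave x y k) = if n = k then 1 else 0) ∧
      Dense (Submodule.span ℂ (Set.range (interleave x y)) : Set (X × Y)) ∧
      ∀ (f : X × Y) (m : ℕ),
        ‖∑ k ∈ Finset.range m, zs k f • interleave x y k‖ ≤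
          (1 + 2 * max 1 (α / β)) * max K₁ K₂ * ‖f‖ := by
  classical
  set z : ℕ → X × Y := interleave x y with hz
  set zs : ℕ → (X × Y) →L[ℂ] ℂ := fun n =>
    if n % 2 = 0 then
      (xs (n / 2)).comp (ContinuousLinearMap.fst ℂ X Y)
        + (ys (n / 2)).comp (ContinuousLinearMap.snd ℂ X Y)
    else (ys (n / 2)).comp (ContinuousLinearMap.snd ℂ X Y) with hzs
  have hα0 : (0 : ℝ) ≤ α := le_trans (norm_nonneg (x 0)) (hα 0)
  have hαβ0 : (0 : ℝ) ≤ α / β := div_nonneg hα0 hβ0.le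
  refine ⟨zs, ?_, ?_, ?_⟩
  · intro n k
    rcases Nat.mod_two_eq_zero_or_one n with hn | hn <;>
      rcases Nat.mod_two_eq_zero_or_one k with hk | hk
    · have hiff : n / 2 = k / 2 ↔ n = k := by omega
      simp [hzs, hz, interleave, hn, hk, hxbi, hybi, hiff]
    · have hne : n ≠ k := by omega
      simp [hzs, hz, interleave, hn, hk, hxbi, hybi, hne]
    · have hne : n ≠ k := by omega
      simp [hzs, hz, interleave, hn, hk, hxbi, hybi, hne]
    · have hiff : n / 2 = k / 2 ↔ n = k := by omega
      simp [hzs, hz, interleave, hn, hk, hxbi, hybi, hiff]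
  · -- density
    have hmemx : ∀ k, ((x k, (0 : Y)) : X × Y) ∈ Submodule.span ℂ (Set.range z) := by
      intro k
      apply Submodule.subset_span
      refine ⟨2 * k, ?_⟩
      simp [hz, interleave, Nat.mul_div_cancel_left k (by norm_num : 0 < 2)]
    have hmemy : ∀ k, (((0 : X), y k) : X × Y) ∈ Submodule.span ℂ (Set.range z) := by
      intro k
      have h1 := hmemx k
      have h2 : ((-x k, y k) : X × Y) ∈ Submodule.span ℂ (Set.range z) := by
        apply Submodule.subset_span
        refine ⟨2 * k + 1, ?_⟩
        have : (2 * k + 1) % 2 = 1 := by omega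
        have h2' : (2 * k + 1) / 2 = k := by omega
        simp [hz, interleave, this, h2']
      have := Submodule.add_mem _ h1 h2
      simpa using this
    have hXmem : ∀ a ∈ Submodule.span ℂ (Set.range x),
        ((a, (0 : Y)) : X × Y) ∈ Submodule.span ℂ (Set.range z) := by
      intro a ha
      induction ha using Submodule.span_induction with
      | mem a h => obtain ⟨k, rfl⟩ := h; exact hmemx k
      | zero => exact Submodule.zero_mem _
      | add a b _ _ ha hb => simpa using Submodule.add_mem _ ha hb
      | smul c a _ ha => simpa using Submodule.smul_mem _ c ha
    have hYmem : ∀ b ∈ Submodule.span ℂ (Set.range y),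
        (((0 : X), b) : X × Y) ∈ Submodule.span ℂ (Set.range z) := by
      intro b hb
      induction hb using Submodule.span_induction with
      | mem b h => obtain ⟨k, rfl⟩ := h; exact hmemy k
      | zero => exact Submodule.zero_mem _
      | add a b _ _ ha hb => simpa using Submodule.add_mem _ ha hb
      | smul c a _ ha => simpa using Submodule.smul_mem _ c ha
    have hsub : ((Submodule.span ℂ (Set.range x) : Set X) ×ˢ
        (Submodule.span ℂ (Set.range y) : Set Y)) ⊆
        (Submodule.span ℂ (Set.range z) : Set (X × Y)) := by
      rintro ⟨a, b⟩ ⟨ha, hb⟩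
      have := Submodule.add_mem _ (hXmem a ha) (hYmem b hb)
      simpa using this
    exact (hxd.prod hyd).mono hsub
  · -- norm bound
    have hM0 : (0 : ℝ) ≤ max K₁ K₂ := le_trans (by linarith) (le_max_left K₁ K₂)
    have key : ∀ (f : X × Y) (m : ℕ),
        ∑ k ∈ Finset.range (2 * m), zs k f • z k =
          (∑ k ∈ Finset.range m, xs k f.1 • x k,
           ∑ k ∈ Finset.range m, ys k f.2 • y k) := by
      intro f m
      induction m with
      | zero => simp; rfl
      | succ m ih =>
        have h2 : 2 * (m + 1) = (2 * m) + 1 + 1 := by ring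
        rw [h2, Finset.sum_range_succ, Finset.sum_range_succ, ih]
        have e1 : (2 * m) % 2 = 0 := by omega
        have e2 : (2 * m) / 2 = m := by omega
        have e3 : (2 * m + 1) % 2 = 1 := by omega
        have e4 : (2 * m + 1) / 2 = m := by omega
        ext
        · simp [hzs, hz, interleave, e1, e2, e3, e4, Finset.sum_range_succ, add_smul,
            smul_neg]
          abel
        · simp [hzs, hz, interleave, e1, e2, e3, e4, Finset.sum_range_succ]
    intro f m
    have hf1 : ‖f.1‖ ≤ ‖f‖ := norm_fst_le f
    have hf2 : ‖f.2‖ ≤ ‖f‖ := norm_snd_le f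
    have hMf1 : K₁ * ‖f.1‖ ≤ max K₁ K₂ * ‖f‖ :=
      mul_le_mul (le_max_left K₁ K₂) hf1 (norm_nonneg _) hM0
    have hMf2 : K₂ * ‖f.2‖ ≤ max K₁ K₂ * ‖f‖ :=
      mul_le_mul (le_max_right K₁ K₂) hf2 (norm_nonneg _) hM0
    have hone : (1 : ℝ) ≤ 1 + 2 * max 1 (α / β) := by
      have : (1 : ℝ) ≤ max 1 (α / β) := le_max_left 1 (α / β)
      linarith
    have hMC : max K₁ K₂ * ‖f‖ ≤ (1 + 2 * max 1 (α / β)) * max K₁ K₂ * ‖f‖ := by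
      have h := mul_nonneg hM0 (norm_nonneg f)
      nlinarith
    rcases Nat.even_or_odd m with ⟨q, hq⟩ | ⟨q, hq⟩
    · have hm : m = 2 * q := by omega
      rw [hm, key f q, Prod.norm_def]
      exact max_le (le_trans (le_trans (hK₁ f.1 q) hMf1) hMC)
        (le_trans (le_trans (hK₂ f.2 q) hMf2) hMC)
    · have hm : m = 2 * q + 1 := by omega
      have e1 : (2 * q) % 2 = 0 := by omega
      have e2 : (2 * q) / 2 = q := by omega
      have hA : ∑ k ∈ Finset.range (2 * q + 1), zs k f • z k =
          ((∑ k ∈ Finset.range (q + 1), xs k f.1 • x k) + (ys q f.2) • x q,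
           ∑ k ∈ Finset.range q, ys k f.2 • y k) := by
        rw [Finset.sum_range_succ, key f q]
        ext
        · simp [hzs, hz, interleave, e1, e2, Finset.sum_range_succ, add_smul]
          abel
        · simp [hzs, hz, interleave, e1, e2]
      rw [hm, hA, Prod.norm_def]
      have hcβ : ‖ys q f.2‖ * β ≤ 2 * (K₂ * ‖f.2‖) := by
        have hdiff : ys q f.2 • y q =
            (∑ k ∈ Finset.range (q + 1), ys k f.2 • y k)
              - ∑ k ∈ Finset.range q, ys k f.2 • y k := by
          rw [Finset.sum_range_succ]; abel
        have h1 : ‖ys q f.2‖ * ‖y q‖ ≤ 2 * (K₂ * ‖f.2‖) := by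
          rw [← norm_smul, hdiff]
          calc ‖_ - _‖ ≤ ‖∑ k ∈ Finset.range (q + 1), ys k f.2 • y k‖
              + ‖∑ k ∈ Finset.range q, ys k f.2 • y k‖ := norm_sub_le _ _
            _ ≤ K₂ * ‖f.2‖ + K₂ * ‖f.2‖ := add_le_add (hK₂ f.2 (q + 1)) (hK₂ f.2 q)
            _ = 2 * (K₂ * ‖f.2‖) := by ring
        calc ‖ys q f.2‖ * β ≤ ‖ys q f.2‖ * ‖y q‖ :=
              mul_le_mul_of_nonneg_left (hβ q) (norm_nonneg _)
          _ ≤ 2 * (K₂ * ‖f.2‖) := h1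
      have hc2 : ‖ys q f.2‖ ≤ 2 * (K₂ * ‖f.2‖) / β := (le_div_iff₀ hβ0).mpr hcβ
      have hc3 : ‖ys q f.2‖ * α ≤ 2 * (K₂ * ‖f.2‖) * (α / β) := by
        calc ‖ys q f.2‖ * α ≤ (2 * (K₂ * ‖f.2‖) / β) * α :=
              mul_le_mul_of_nonneg_right hc2 hα0
          _ = 2 * (K₂ * ‖f.2‖) * (α / β) := by ring
      apply max_le
      · have h1 : ‖(∑ k ∈ Finset.range (q + 1), xs k f.1 • x k) + (ys q f.2) • x q‖
            ≤ K₁ * ‖f.1‖ + ‖ys q f.2‖ * α := by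
          calc ‖_ + _‖ ≤ ‖∑ k ∈ Finset.range (q + 1), xs k f.1 • x k‖
              + ‖(ys q f.2) • x q‖ := norm_add_le _ _
            _ ≤ K₁ * ‖f.1‖ + ‖ys q f.2‖ * α := by
                refine add_le_add (hK₁ f.1 (q + 1)) ?_
                rw [norm_smul]
                exact mul_le_mul_of_nonneg_left (hα q) (norm_nonneg _)
        have h2 : 2 * (K₂ * ‖f.2‖) * (α / β) ≤ 2 * max 1 (α / β) * (max K₁ K₂ * ‖f‖) := by
          have hstep : (K₂ * ‖f.2‖) * (α / β) ≤ (max K₁ K₂ * ‖f‖) * max 1 (α / β) :=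
            mul_le_mul hMf2 (le_max_right 1 (α / β)) hαβ0
              (mul_nonneg hM0 (norm_nonneg f))
          calc 2 * (K₂ * ‖f.2‖) * (α / β) = 2 * ((K₂ * ‖f.2‖) * (α / β)) := by ring
            _ ≤ 2 * ((max K₁ K₂ * ‖f‖) * max 1 (α / β)) := by linarith
            _ = 2 * max 1 (α / β) * (max K₁ K₂ * ‖f‖) := by ring
        calc _ ≤ K₁ * ‖f.1‖ + ‖ys q f.2‖ * α := h1
          _ ≤ max K₁ K₂ * ‖f‖ + 2 * max 1 (α / β) * (max K₁ K₂ * ‖f‖) := by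
              refine add_le_add hMf1 (le_trans hc3 h2)
          _ = (1 + 2 * max 1 (α / β)) * max K₁ K₂ * ‖f‖ := by ring
      · exact le_trans (le_trans (hK₂ f.2 q) hMf2) hMC
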